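/- Let Z be a UFD in which every quotient by a prime principal ideal is infinite, and suppose the Schinzel Hypothesis holds for Z (for any finitely many polynomials in Z[y] irreducible over Frac(Z), pairwise non-associate over Frac(Z), satisfying (AV1), and any finite set S of primes of Z, there is m ∈ Z making all values prime, pairwise non-associate, and non-associate to primes in S). Then the relative Schinzel Hypothesis holds for Z: for any s ≥ 2 nonzero polynomials P_1,...,P_s ∈ Z[y] with no common divisor in Frac(Z)[y] and satisfying (AV2), there exists m ∈ Z such that P_1(m),...,P_s(m) have no common non-unit divisor in Z. -/
import Mathlib


open Polynomial
open scoped Pointwise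

lemma stmt_19_bezout_aux {Z : Type*} [CommRing Z] [IsDomain Z] {s : ℕ}
    (P : Fin s → Polynomial Z)
    (hcop : ∀ d : Polynomial (FractionRing Z),
        (∀ i, d ∣ (P i).map (algebraMap Z (FractionRing Z))) → IsUnit d) :
    ∃ δ : Z, δ ≠ 0 ∧ ∃ u : Fin s → Polynomial Z, ∑ i, u i * P i = Polynomial.C δ := by
  classical
  set K := FractionRing Z
  set φ := algebraMap Z K with hφdef
  have hφ : Function.Injective φ := IsFractionRing.injective Z K
  set I : Ideal (Polynomial K) := Ideal.span (Set.range fun i => (P i).map φ) with hI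
  have hprin : I.IsPrincipal := inferInstance
  obtain ⟨g, hg⟩ := hprin.principal
  have hgdvd : ∀ i, g ∣ (P i).map φ := fun i => by
    have hmem : (P i).map φ ∈ I := Ideal.subset_span ⟨i, rfl⟩
    rw [hg] at hmem
    exact Ideal.mem_span_singleton.mp hmem
  have hunit : IsUnit g := hcop g hgdvd
  have htop : I = ⊤ := by rw [hg]; exact Ideal.span_singleton_eq_top.mpr hunit
  have h1 : (1 : Polynomial K) ∈ I := htop ▸ Submodule.mem_top
  rw [hI] at h1
  obtain ⟨c, hc⟩ := Ideal.mem_span_range_iff_exists_fun.mp h1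
  choose b hb using fun i =>
    IsLocalization.integerNormalization_map_to_map (nonZeroDivisors Z) (c i)
  set v : Fin s → Polynomial Z :=
    fun i => IsLocalization.integerNormalization (nonZeroDivisors Z) (c i) with hv
  set d : Fin s → Z := fun i => (b i : Z) with hd
  have hd0 : ∀ i, d i ≠ 0 := fun i => nonZeroDivisors.ne_zero (b i).2
  refine ⟨∏ i, d i, Finset.prod_ne_zero_iff.mpr (fun i _ => hd0 i),
    fun i => C (∏ j ∈ Finset.univ.erase i, d j) * v i, ?_⟩
  apply Polynomial.map_injective φ hφ
  have hterm : ∀ i : Fin s,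
      (C (∏ j ∈ Finset.univ.erase i, d j) * v i * P i).map φ
        = C (φ (∏ j, d j)) * (c i * (P i).map φ) := by
    intro i
    rw [Polynomial.map_mul, Polynomial.map_mul, Polynomial.map_C, hb i,
      Algebra.smul_def, Polynomial.algebraMap_apply,
      ← Finset.prod_erase_mul Finset.univ d (Finset.mem_univ i), map_mul φ, map_mul (C : K →+* _)]
    simp only [hd]
    ring
  rw [Polynomial.map_sum, Polynomial.map_C]
  calc ∑ i, (C (∏ j ∈ Finset.univ.erase i, d j) * v i * P i).map φ
      = ∑ i, C (φ (∏ j, d j)) * (c i * (P i).map φ) := Finset.sum_congr rfl fun i _ => hterm i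
    _ = C (φ (∏ j, d j)) * ∑ i, c i * (P i).map φ := by rw [Finset.mul_sum]
    _ = C (φ (∏ j, d j)) := by rw [hc, mul_one]

theorem stmt_19 {Z : Type*} [CommRing Z] [IsDomain Z] [UniqueFactorizationMonoid Z]
    (hres : ∀ p : Z, Prime p → Infinite (Z ⧸ Ideal.span {p}))
    (hSchinzel : ∀ (n : ℕ) (P : Fin n → Polynomial Z),
      (∀ i, Irreducible ((P i).map (algebraMap Z (FractionRing Z)))) →
      (∀ i j, i ≠ j → ¬ Associated ((P i).map (algebraMap Z (FractionRing Z)))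
        ((P j).map (algebraMap Z (FractionRing Z)))) →
      (∀ p : Z, Prime p → ∃ m : Z, ¬ p ∣ (∏ i, P i).eval m) →
      ∀ S : Finset Z, (∀ q ∈ S, Prime q) →
        ∃ m : Z, (∀ i, Prime ((P i).eval m)) ∧
          (∀ i j, i ≠ j → ¬ Associated ((P i).eval m) ((P j).eval m)) ∧
          (∀ i, ∀ q ∈ S, ¬ Associated ((P i).eval m) q)) :
    ∀ (s : ℕ), 2 ≤ s → ∀ (P : Fin s → Polynomial Z), (∀ i, P i ≠ 0) →
      (∀ d : Polynomial (FractionRing Z),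
        (∀ i, d ∣ (P i).map (algebraMap Z (FractionRing Z))) → IsUnit d) →
      (∀ p : Z, Prime p → ∃ m : Z, ∃ i, ¬ p ∣ (P i).eval m) →
      ∃ m : Z, ∀ d : Z, (∀ i, d ∣ (P i).eval m) → IsUnit d := by
  intro s _hs P _hP0 hcop hAV2
  classical
  obtain ⟨δ, hδ0, u, hu⟩ := stmt_19_bezout_aux P hcop
  set T : Finset Z := (UniqueFactorizationMonoid.factors δ).toFinset with hT
  have hTprime : ∀ p ∈ T, Prime p := fun p hp =>
    UniqueFactorizationMonoid.prime_of_factor p (Multiset.mem_toFinset.mp hp)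
  -- for each prime in T, a finite set of coset representatives of the "bad" residues
  have key : ∀ p : Z, ∃ F : Finset Z, p ∈ T →
      ∀ m : Z, (∀ i, p ∣ (P i).eval m) → ∃ x ∈ F, m - x ∈ Ideal.span {p} := by
    intro p
    by_cases hpT : p ∈ T
    · have hp : Prime p := hTprime p hpT
      haveI : (Ideal.span {p} : Ideal Z).IsPrime :=
        (Ideal.span_singleton_prime hp.ne_zero).mpr hp
      set π := Ideal.Quotient.mk (Ideal.span {p} : Ideal Z) with hπ
      obtain ⟨m0, i0, hm0⟩ := hAV2 p hp
      have hQ0 : (P i0).map π ≠ 0 := by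
        intro h
        apply hm0
        rw [← Ideal.mem_span_singleton, ← Ideal.Quotient.eq_zero_iff_mem]
        have := congrArg (Polynomial.eval (π m0)) h
        rwa [Polynomial.eval_map, Polynomial.eval₂_at_apply, Polynomial.eval_zero] at this
      have hfin : {x : Z ⧸ Ideal.span {p} | ((P i0).map π).IsRoot x}.Finite :=
        Polynomial.finite_setOf_isRoot hQ0
      have hsurj := Ideal.Quotient.mk_surjective (I := (Ideal.span {p} : Ideal Z))
      refine ⟨hfin.toFinset.image (fun r => (hsurj r).choose), fun _ m hm => ?_⟩
      refine ⟨(hsurj (π m)).choose, Finset.mem_image_of_mem _ ?_, ?_⟩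
      · rw [Set.Finite.mem_toFinset]
        show ((P i0).map π).IsRoot (π m)
        have : π ((P i0).eval m) = 0 := by
          rw [Ideal.Quotient.eq_zero_iff_mem, Ideal.mem_span_singleton]
          exact hm i0
        rwa [IsRoot, Polynomial.eval_map, Polynomial.eval₂_at_apply]
      · rw [← Ideal.Quotient.eq_zero_iff_mem, map_sub]
        rw [(hsurj (π m)).choose_spec]
        exact sub_self _
    · exact ⟨∅, fun h => absurd h hpT⟩
  choose F hF using key
  by_contra hcon
  push_neg at hcon
  -- build the coset cover
  set H : Z × Z → AddSubgroup Z := fun q => (Ideal.span {q.1} : Ideal Z).toAddSubgroup with hH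
  set g : Z × Z → Z := fun q => q.2 with hg
  set S : Finset (Z × Z) := T.biUnion (fun p => (F p).image (fun x => (p, x))) with hS
  have hcovers : ⋃ i ∈ S, (g i +ᵥ (H i : Set Z)) = Set.univ := by
    rw [Set.eq_univ_iff_forall]
    intro m
    obtain ⟨d, hd, hdnu⟩ := hcon m
    have hdδ : d ∣ δ := by
      have h1 := congrArg (Polynomial.eval m) hu
      rw [Polynomial.eval_finset_sum, Polynomial.eval_C] at h1
      rw [← h1]
      refine Finset.dvd_sum fun i _ => ?_
      rw [Polynomial.eval_mul]
      exact Dvd.dvd.mul_left (hd i) _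
    have hd0 : d ≠ 0 := fun h => hδ0 (by simpa [h] using hdδ)
    obtain ⟨q, hqirr, hqd⟩ := WfDvdMonoid.exists_irreducible_factor hdnu hd0
    obtain ⟨p, hpfac, hqp⟩ :=
      UniqueFactorizationMonoid.exists_mem_factors_of_dvd hδ0 hqirr (hqd.trans hdδ)
    have hpT : p ∈ T := Multiset.mem_toFinset.mpr hpfac
    have hpdvd : ∀ i, p ∣ (P i).eval m := fun i =>
      (hqp.symm.dvd.trans hqd).trans (hd i)
    obtain ⟨x, hxF, hx⟩ := hF p hpT m hpdvd
    refine Set.mem_biUnion (?_ : (p, x) ∈ S) ?_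
    · exact Finset.mem_biUnion.mpr ⟨p, hpT, Finset.mem_image_of_mem _ hxF⟩
    · refine ⟨m - x, hx, ?_⟩
      show x + (m - x) = m
      ring
  obtain ⟨k, hkS, hkFI⟩ := AddSubgroup.exists_finiteIndex_of_leftCoset_cover hcovers
  obtain ⟨p, hpT, hk⟩ := Finset.mem_biUnion.mp hkS
  obtain ⟨x, _, hkeq⟩ := Finset.mem_image.mp hk
  have hp : Prime p := hTprime p hpT
  have hinf : Infinite (Z ⧸ H k) := by
    rw [← hkeq]
    exact hres p hp
  exact hkFI.index_ne_zero ((AddSubgroup.index_eq_zero_iff_infinite).mpr hinf)
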